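/- Let V be a variety with 0⃗ and 1⃗ having Boolean factor congruences (BFC), and let A ∈ V. Then Z(A) = (Z(A), ∧, ∨, ^c, 0⃗, 1⃗), with the operations defined via unique solutions of the associated congruence systems, is a Boolean algebra, and the map e⃗ ↦ θ_{0,e} is a Boolean algebra isomorphism from Z(A) onto (FC(A), ∨, ∩, *, Δ, ∇), where * denotes factor complement. -/

import Mathlib

open FirstOrder FirstOrder.Language FirstOrder.Language.Structure

universe u v w

namespace Paper

variable {L : FirstOrder.Language.{0, 0}}

/-- A congruence on an `L`-algebra: an equivalence relation compatible with all operations. -/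
structure AlgCon (L : FirstOrder.Language.{0, 0}) (A : Type u) [L.Structure A] where
  r : A → A → Prop
  refl : ∀ a, r a a
  symm : ∀ {a b}, r a b → r b a
  trans : ∀ {a b c}, r a b → r b c → r a c
  compat : ∀ {m : ℕ} (f : L.Functions m) (x y : Fin m → A),
    (∀ i, r (x i) (y i)) → r (funMap f x) (funMap f y)

namespace AlgCon

variable {A : Type u} [L.Structure A]

theorem ext' {c d : AlgCon L A} (h : ∀ a b, c.r a b ↔ d.r a b) : c = d := by
  cases c; cases d
  simp only [AlgCon.mk.injEq]
  funext a b
  exact propext (h a b)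

/-- The identity (diagonal) congruence Δ. -/
def delta (L : FirstOrder.Language.{0, 0}) (A : Type u) [L.Structure A] : AlgCon L A where
  r := Eq
  refl := fun _ => rfl
  symm := fun h => h.symm
  trans := fun h1 h2 => h1.trans h2
  compat := fun f x y h => by rw [funext h]

/-- The universal congruence ∇. -/
def nabla (L : FirstOrder.Language.{0, 0}) (A : Type u) [L.Structure A] : AlgCon L A where
  r := fun _ _ => True
  refl := fun _ => trivial
  symm := fun _ => trivial
  trans := fun _ _ => trivial
  compat := fun _ _ _ _ => trivial

/-- Meet (intersection) of congruences. -/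
def inf (c d : AlgCon L A) : AlgCon L A where
  r := fun a b => c.r a b ∧ d.r a b
  refl := fun a => ⟨c.refl a, d.refl a⟩
  symm := fun h => ⟨c.symm h.1, d.symm h.2⟩
  trans := fun h1 h2 => ⟨c.trans h1.1 h2.1, d.trans h1.2 h2.2⟩
  compat := fun f x y h =>
    ⟨c.compat f x y fun i => (h i).1, d.compat f x y fun i => (h i).2⟩

/-- Relational composition of congruences (as a binary relation). -/
def comp (c d : AlgCon L A) (a b : A) : Prop := ∃ z, c.r a z ∧ d.r z b

/-- The congruence generated by a binary relation. -/
def conGen (L : FirstOrder.Language.{0, 0}) {A : Type u} [L.Structure A]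
    (R : A → A → Prop) : AlgCon L A where
  r := fun a b => ∀ c : AlgCon L A, (∀ x y, R x y → c.r x y) → c.r a b
  refl := fun a _ _ => AlgCon.refl _ a
  symm := fun h c hc => c.symm (h c hc)
  trans := fun h1 h2 c hc => c.trans (h1 c hc) (h2 c hc)
  compat := fun f x y h c hc => c.compat f x y fun i => h i c hc

/-- Join of congruences in the congruence lattice. -/
def sup (c d : AlgCon L A) : AlgCon L A :=
  conGen L (fun a b => c.r a b ∨ d.r a b)

end AlgCon

/-- The principal congruence θ(a⃗, b⃗) generated by the pairs (aᵢ, bᵢ). -/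
def thetaPairs {A : Type u} [L.Structure A] {n : ℕ} (a b : Fin n → A) : AlgCon L A :=
  AlgCon.conGen L (fun x y => ∃ i, x = a i ∧ y = b i)

/-- The congruence θ(S) generated by S × S. -/
def thetaSet {A : Type u} [L.Structure A] (S : Set A) : AlgCon L A :=
  AlgCon.conGen L (fun x y => x ∈ S ∧ y ∈ S)

/-- `[a⃗, b⃗] ∈ θ`: all pairs (aᵢ, bᵢ) belong to the congruence θ. -/
def inCon {A : Type u} [L.Structure A] {n : ℕ} (θ : AlgCon L A) (a b : Fin n → A) : Prop :=
  ∀ i, θ.r (a i) (b i)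

/-- θ and δ are complementary factor congruences: θ ∩ δ = Δ and θ ∘ δ = ∇. -/
def IsComplFC {A : Type u} [L.Structure A] (θ δ : AlgCon L A) : Prop :=
  θ.inf δ = AlgCon.delta L A ∧ ∀ a b : A, θ.comp δ a b

/-- The set of factor congruences of `A`. -/
def FC (L : FirstOrder.Language.{0, 0}) (A : Type u) [L.Structure A] : Set (AlgCon L A) :=
  {θ | ∃ δ, IsComplFC θ δ}

/-- `S` is a Boolean sublattice of the congruence lattice of `A`: it contains Δ and ∇,
is closed under meet and join, is distributive, and every element has a complement in `S`. -/
def IsBooleanSublattice {A : Type u} [L.Structure A] (S : Set (AlgCon L A)) : Prop :=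
  AlgCon.delta L A ∈ S ∧ AlgCon.nabla L A ∈ S ∧
  (∀ θ ∈ S, ∀ δ ∈ S, θ.inf δ ∈ S) ∧
  (∀ θ ∈ S, ∀ δ ∈ S, θ.sup δ ∈ S) ∧
  (∀ θ ∈ S, ∀ δ ∈ S, ∀ γ ∈ S, θ.inf (δ.sup γ) = (θ.inf δ).sup (θ.inf γ)) ∧
  (∀ θ ∈ S, ∃ δ ∈ S, θ.inf δ = AlgCon.delta L A ∧ θ.sup δ = AlgCon.nabla L A)

/-- An identity (equation between two terms in finitely many variables). -/
structure Identity (L : FirstOrder.Language.{0, 0}) where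
  nvars : ℕ
  lhs : L.Term (Fin nvars)
  rhs : L.Term (Fin nvars)

/-- An identity holds in an algebra. -/
def Identity.Holds (e : Identity L) (A : Type u) [L.Structure A] : Prop :=
  ∀ v : Fin e.nvars → A, e.lhs.realize v = e.rhs.realize v

/-- Membership of an algebra in the variety axiomatized by the set of identities `E`. -/
def InVariety (E : Set (Identity L)) (A : Type u) [L.Structure A] : Prop :=
  ∀ e ∈ E, e.Holds A

/-- The data of the closed terms 0₁, …, 0ₙ and 1₁, …, 1ₙ. -/
structure ZeroOneData (L : FirstOrder.Language.{0, 0}) where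
  n : ℕ
  npos : 0 < n
  zero : Fin n → L.Term Empty
  one : Fin n → L.Term Empty

/-- The interpretation of the tuple 0⃗ in an algebra. -/
def ZeroOneData.zeroA (Z : ZeroOneData L) (A : Type u) [L.Structure A] : Fin Z.n → A :=
  fun i => (Z.zero i).realize Empty.elim

/-- The interpretation of the tuple 1⃗ in an algebra. -/
def ZeroOneData.oneA (Z : ZeroOneData L) (A : Type u) [L.Structure A] : Fin Z.n → A :=
  fun i => (Z.one i).realize Empty.elim

/-- `V ⊨ (0⃗ ≈ 1⃗) → x ≈ y`: `V` is a variety with 0⃗ and 1⃗. -/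
def ZeroOneData.Separates (Z : ZeroOneData L) (E : Set (Identity L)) : Prop :=
  ∀ (A : Type u) [L.Structure A], InVariety E A →
    (∀ i, Z.zeroA A i = Z.oneA A i) → Subsingleton A

/-- Product structure on `A × B`. -/
instance prodStructure (A : Type u) (B : Type u) [L.Structure A] [L.Structure B] :
    L.Structure (A × B) where
  funMap := fun f x => (funMap f (fun i => (x i).1), funMap f (fun i => (x i).2))
  RelMap := fun r x => RelMap r (fun i => (x i).1) ∧ RelMap r (fun i => (x i).2)

/-- A witness that `e⃗` is a central element of `A`: an isomorphism
`τ : A ≅ A₁ × A₂` with `A₁, A₂ ∈ V` and `τ(e⃗) = [0⃗, 1⃗]`. -/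
structure CentralWitness (E : Set (Identity L)) (Z : ZeroOneData L)
    (A : Type u) [L.Structure A] (e : Fin Z.n → A) : Type (u + 1) where
  A₁ : Type u
  A₂ : Type u
  [s₁ : L.Structure A₁]
  [s₂ : L.Structure A₂]
  mem₁ : InVariety E A₁
  mem₂ : InVariety E A₂
  iso : A ≃[L] (A₁ × A₂)
  he : ∀ i, iso (e i) = (Z.zeroA A₁ i, Z.oneA A₂ i)

/-- A witness that `e⃗` and `f⃗` are complementary central elements of `A`. -/
structure ComplCentralWitness (E : Set (Identity L)) (Z : ZeroOneData L)
    (A : Type u) [L.Structure A] (e f : Fin Z.n → A) extends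
    CentralWitness E Z A e : Type (u + 1) where
  hf : ∀ i, iso (f i) = (Z.oneA A₁ i, Z.zeroA A₂ i)

/-- `e⃗` is a central element of `A`. -/
def IsCentral (E : Set (Identity L)) (Z : ZeroOneData L)
    (A : Type u) [L.Structure A] (e : Fin Z.n → A) : Prop :=
  Nonempty (CentralWitness E Z A e)

/-- `e⃗ ⋄_A f⃗`: `e⃗` and `f⃗` are complementary central elements of `A`. -/
def CentDiamond (E : Set (Identity L)) (Z : ZeroOneData L)
    (A : Type u) [L.Structure A] (e f : Fin Z.n → A) : Prop :=
  Nonempty (ComplCentralWitness E Z A e f)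

/-- `V` has Boolean factor congruences: for every `A ∈ V`, `FC(A)` is a Boolean
sublattice of `Con(A)`. -/
def HasBFC (E : Set (Identity L)) : Prop :=
  ∀ (A : Type u) [L.Structure A], InVariety E A → IsBooleanSublattice (FC L A)

/-- `V` is stable by complements: every homomorphism between members of `V`
preserves complementary central elements. -/
def StableByComplements (E : Set (Identity L)) (Z : ZeroOneData L) : Prop :=
  ∀ (A B : Type u) [L.Structure A] [L.Structure B], InVariety E A → InVariety E B →
    ∀ (f : A →[L] B) (e g : Fin Z.n → A), CentDiamond E Z A e g →
      CentDiamond E Z B (fun i => f (e i)) (fun i => f (g i))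

/-- A formula is existential: of the form ∃w⃗ ψ with ψ quantifier-free. -/
def IsExistentialForm {α : Type*} (φ : L.Formula α) : Prop :=
  ∃ (m : ℕ) (ψ : L.BoundedFormula α m), ψ.IsQF ∧ φ = ψ.exs

/-- The formula λ(z⃗, x, y) satisfies the condition (R): for all `A, B ∈ V`,
`A × B ⊨ λ([0⃗,1⃗], (a,c), (b,d))` iff `c = d`. -/
def RightFormulaWorks (E : Set (Identity L)) (Z : ZeroOneData L)
    (φ : L.Formula ((Fin Z.n) ⊕ (Fin 2))) : Prop :=
  ∀ (A B : Type u) [L.Structure A] [L.Structure B], InVariety E A → InVariety E B →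
    ∀ (a b : A) (c d : B),
      (φ.Realize (M := A × B)
        (Sum.elim (fun i => (Z.zeroA A i, Z.oneA B i)) ![(a, c), (b, d)]) ↔ c = d)

/-- The formula ρ(z⃗, x, y) satisfies the condition (L): for all `A, B ∈ V`,
`A × B ⊨ ρ([0⃗,1⃗], (a,c), (b,d))` iff `a = b`. -/
def LeftFormulaWorks (E : Set (Identity L)) (Z : ZeroOneData L)
    (φ : L.Formula ((Fin Z.n) ⊕ (Fin 2))) : Prop :=
  ∀ (A B : Type u) [L.Structure A] [L.Structure B], InVariety E A → InVariety E B →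
    ∀ (a b : A) (c d : B),
      (φ.Realize (M := A × B)
        (Sum.elim (fun i => (Z.zeroA A i, Z.oneA B i)) ![(a, c), (b, d)]) ↔ a = b)

/-- `V` has right existentially definable factor congruences. -/
def HasRexDFC (E : Set (Identity L)) (Z : ZeroOneData L) : Prop :=
  HasBFC.{u} E ∧ ∃ φ : L.Formula ((Fin Z.n) ⊕ (Fin 2)),
    IsExistentialForm φ ∧ RightFormulaWorks.{u} E Z φ

/-- `V` has left existentially definable factor congruences. -/
def HasLexDFC (E : Set (Identity L)) (Z : ZeroOneData L) : Prop :=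
  HasBFC.{u} E ∧ ∃ φ : L.Formula ((Fin Z.n) ⊕ (Fin 2)),
    IsExistentialForm φ ∧ LeftFormulaWorks.{u} E Z φ

/-- `(θ, δ)` is the pair of complementary factor congruences associated with the
central element `e⃗`, i.e. `θ ⋄ δ`, `[e⃗,0⃗] ∈ θ` and `[e⃗,1⃗] ∈ δ`. -/
def PairFor (Z : ZeroOneData L) (A : Type u) [L.Structure A]
    (e : Fin Z.n → A) (θ δ : AlgCon L A) : Prop :=
  IsComplFC θ δ ∧ inCon θ e (Z.zeroA A) ∧ inCon δ e (Z.oneA A)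

/-- `a⃗ = e⃗ ∧ f⃗` in the center: `[a⃗,0⃗] ∈ θ_{0,e} ∩ θ_{0,f}` and `[a⃗,1⃗] ∈ θ_{1,e} ∨ θ_{1,f}`. -/
def IsMeetOf (Z : ZeroOneData L) (A : Type u) [L.Structure A]
    (e f a : Fin Z.n → A) : Prop :=
  ∃ θ₀e θ₁e θ₀f θ₁f : AlgCon L A, PairFor Z A e θ₀e θ₁e ∧ PairFor Z A f θ₀f θ₁f ∧
    inCon (θ₀e.inf θ₀f) a (Z.zeroA A) ∧ inCon (θ₁e.sup θ₁f) a (Z.oneA A)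

/-- `a⃗ = e⃗ ∨ f⃗` in the center: `[a⃗,0⃗] ∈ θ_{0,e} ∨ θ_{0,f}` and `[a⃗,1⃗] ∈ θ_{1,e} ∩ θ_{1,f}`. -/
def IsJoinOf (Z : ZeroOneData L) (A : Type u) [L.Structure A]
    (e f a : Fin Z.n → A) : Prop :=
  ∃ θ₀e θ₁e θ₀f θ₁f : AlgCon L A, PairFor Z A e θ₀e θ₁e ∧ PairFor Z A f θ₀f θ₁f ∧
    inCon (θ₀e.sup θ₀f) a (Z.zeroA A) ∧ inCon (θ₁e.inf θ₁f) a (Z.oneA A)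

/-- `a⃗ = e⃗^c` in the center: `[a⃗,1⃗] ∈ θ_{0,e}` and `[a⃗,0⃗] ∈ θ_{1,e}`. -/
def IsComplOf (Z : ZeroOneData L) (A : Type u) [L.Structure A]
    (e a : Fin Z.n → A) : Prop :=
  ∃ θ₀e θ₁e : AlgCon L A, PairFor Z A e θ₀e θ₁e ∧
    inCon θ₀e a (Z.oneA A) ∧ inCon θ₁e a (Z.zeroA A)

section Quotient

variable {A : Type u} [L.Structure A]

/-- The setoid underlying a congruence. -/
def AlgCon.setoid (c : AlgCon L A) : Setoid A :=
  ⟨c.r, ⟨c.refl, fun h => c.symm h, fun h1 h2 => c.trans h1 h2⟩⟩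

/-- The quotient algebra `A/θ`. -/
def ConQuot (c : AlgCon L A) : Type u := Quotient c.setoid

/-- The class of `a` in `A/θ`. -/
def ConQuot.mk (c : AlgCon L A) (a : A) : ConQuot c := Quotient.mk c.setoid a

noncomputable instance conQuotStructure (c : AlgCon L A) : L.Structure (ConQuot c) where
  funMap := fun f x => ConQuot.mk c (funMap f (fun i => (Quotient.out (α := A) (s := c.setoid) (x i))))
  RelMap := fun r x => ∃ as : Fin _ → A, (∀ i, ConQuot.mk c (as i) = x i) ∧ RelMap r as

theorem conQuot_funMap_mk (c : AlgCon L A) {m : ℕ} (f : L.Functions m) (as : Fin m → A) :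
    funMap f (fun i => ConQuot.mk c (as i)) = ConQuot.mk c (funMap f as) := by
  show ConQuot.mk c _ = ConQuot.mk c _
  apply Quotient.sound
  apply c.compat
  intro i
  exact Quotient.mk_out (s := c.setoid) (as i)

/-- The canonical quotient homomorphism `A → A/θ`. -/
def conQuotMk (c : AlgCon L A) : A →[L] ConQuot c where
  toFun := ConQuot.mk c
  map_fun' := fun f x => (conQuot_funMap_mk c f x).symm
  map_rel' := fun _r x h => ⟨x, fun _ => rfl, h⟩

end Quotient

end Paper

namespace Paper

open FirstOrder FirstOrder.Language FirstOrder.Language.Structure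

variable {L : FirstOrder.Language.{0, 0}} {A : Type u} [L.Structure A]

namespace AlgCon

/-- Order on congruences. -/
def le (c d : AlgCon L A) : Prop := ∀ ⦃a b : A⦄, c.r a b → d.r a b

theorem le_antisymm' {c d : AlgCon L A} (h : c.le d) (h' : d.le c) : c = d :=
  ext' fun a b => ⟨@h a b, @h' a b⟩

theorem r_congr {c d : AlgCon L A} (h : c = d) (a b : A) : c.r a b ↔ d.r a b := by rw [h]

theorem conGen_rel {R : A → A → Prop} {a b : A} (h : R a b) : (conGen L R).r a b :=
  fun c hc => hc a b h

theorem conGen_le {R : A → A → Prop} {c : AlgCon L A} (h : ∀ x y, R x y → c.r x y) :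
    (conGen L R).le c := fun _ _ hab => hab c h

theorem le_sup_left' (c d : AlgCon L A) : c.le (c.sup d) :=
  fun _ _ h => conGen_rel (Or.inl h)

theorem le_sup_right' (c d : AlgCon L A) : d.le (c.sup d) :=
  fun _ _ h => conGen_rel (Or.inr h)

theorem sup_le' {c d e : AlgCon L A} (h1 : c.le e) (h2 : d.le e) : (c.sup d).le e :=
  conGen_le fun x y h => h.elim (fun h' => h1 h') (fun h' => h2 h')

theorem inf_le_left' (c d : AlgCon L A) : (c.inf d).le c := fun _ _ h => h.1
theorem inf_le_right' (c d : AlgCon L A) : (c.inf d).le d := fun _ _ h => h.2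
theorem le_inf' {c d e : AlgCon L A} (h1 : c.le d) (h2 : c.le e) : c.le (d.inf e) :=
  fun _ _ h => ⟨h1 h, h2 h⟩

theorem delta_le (c : AlgCon L A) : (delta L A).le c := fun a _ h => h ▸ c.refl a
theorem le_nabla (c : AlgCon L A) : c.le (nabla L A) := fun _ _ _ => trivial

theorem eq_nabla_of_nabla_le {c : AlgCon L A} (h : (nabla L A).le c) : c = nabla L A :=
  le_antisymm' (le_nabla c) h

end AlgCon

theorem IsComplFC.memL {θ δ : AlgCon L A} (h : IsComplFC θ δ) : θ ∈ FC L A := ⟨δ, h⟩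

theorem IsComplFC.symm' {θ δ : AlgCon L A} (h : IsComplFC θ δ) : IsComplFC δ θ := by
  constructor
  · apply AlgCon.ext'
    intro a b
    rw [← AlgCon.r_congr h.1 a b]
    exact and_comm
  · intro a b
    obtain ⟨z, h1, h2⟩ := h.2 b a
    exact ⟨z, δ.symm h2, θ.symm h1⟩

theorem IsComplFC.memR {θ δ : AlgCon L A} (h : IsComplFC θ δ) : δ ∈ FC L A := ⟨θ, h.symm'⟩

theorem IsComplFC.sup_eq {θ δ : AlgCon L A} (h : IsComplFC θ δ) :
    θ.sup δ = AlgCon.nabla L A := by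
  apply AlgCon.eq_nabla_of_nabla_le
  intro a b _
  obtain ⟨z, h1, h2⟩ := h.2 a b
  exact (θ.sup δ).trans (AlgCon.le_sup_left' θ δ h1) (AlgCon.le_sup_right' θ δ h2)

theorem IsComplFC.nabla_right {δ : AlgCon L A} (h : IsComplFC (AlgCon.nabla L A) δ) :
    δ = AlgCon.delta L A := by
  apply AlgCon.le_antisymm' _ (AlgCon.delta_le δ)
  intro a b hr
  exact (AlgCon.r_congr h.1 a b).mp ⟨trivial, hr⟩

/-! ### Homomorphisms, closed terms, products -/

theorem map_zeroA {B : Type u} [L.Structure B] (Z : ZeroOneData L) {F : Type*}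
    [FunLike F A B] [HomClass L F A B] (f : F) (i : Fin Z.n) :
    f (Z.zeroA A i) = Z.zeroA B i := by
  unfold ZeroOneData.zeroA
  rw [← HomClass.realize_term f (t := Z.zero i) (v := Empty.elim)]
  congr
  funext x
  exact x.elim

theorem map_oneA {B : Type u} [L.Structure B] (Z : ZeroOneData L) {F : Type*}
    [FunLike F A B] [HomClass L F A B] (f : F) (i : Fin Z.n) :
    f (Z.oneA A i) = Z.oneA B i := by
  unfold ZeroOneData.oneA
  rw [← HomClass.realize_term f (t := Z.one i) (v := Empty.elim)]
  congr
  funext x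
  exact x.elim

/-- First projection as a homomorphism. -/
def fstHom (A B : Type u) [L.Structure A] [L.Structure B] : (A × B) →[L] A where
  toFun := Prod.fst
  map_fun' := fun _ _ => rfl
  map_rel' := fun _ _ h => h.1

/-- Second projection as a homomorphism. -/
def sndHom (A B : Type u) [L.Structure A] [L.Structure B] : (A × B) →[L] B where
  toFun := Prod.snd
  map_fun' := fun _ _ => rfl
  map_rel' := fun _ _ h => h.2

theorem zeroA_prod (Z : ZeroOneData L) (B C : Type u) [L.Structure B] [L.Structure C]
    (i : Fin Z.n) : Z.zeroA (B × C) i = (Z.zeroA B i, Z.zeroA C i) :=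
  Prod.ext (map_zeroA Z (fstHom B C) i) (map_zeroA Z (sndHom B C) i)

theorem oneA_prod (Z : ZeroOneData L) (B C : Type u) [L.Structure B] [L.Structure C]
    (i : Fin Z.n) : Z.oneA (B × C) i = (Z.oneA B i, Z.oneA C i) :=
  Prod.ext (map_oneA Z (fstHom B C) i) (map_oneA Z (sndHom B C) i)

/-! ### Quotients -/

theorem conQuot_mk_surjective (c : AlgCon L A) : Function.Surjective (ConQuot.mk c) :=
  fun x => ⟨Quotient.out (s := c.setoid) x, Quotient.out_eq (s := c.setoid) x⟩

theorem inVariety_conQuot {E : Set (Identity L)} (hA : InVariety E A) (c : AlgCon L A) :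
    InVariety E (ConQuot c) := by
  intro e he v
  obtain ⟨w, hw⟩ : ∃ w : Fin e.nvars → A, (⇑(conQuotMk c) ∘ w) = v :=
    ⟨fun i => Quotient.out (s := c.setoid) (v i),
      funext fun i => Quotient.out_eq (s := c.setoid) (v i)⟩
  subst hw
  rw [HomClass.realize_term (conQuotMk c), HomClass.realize_term (conQuotMk c), hA e he w]

theorem conQuot_subsingleton (c : AlgCon L A) (h : Subsingleton (ConQuot c)) :
    c = AlgCon.nabla L A := by
  apply AlgCon.eq_nabla_of_nabla_le
  intro a b _
  exact Quotient.exact (s := c.setoid) (Subsingleton.elim (ConQuot.mk c a) (ConQuot.mk c b))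

theorem eq_nabla_of_zero_one {E : Set (Identity L)} {Z : ZeroOneData L}
    (hsep : ZeroOneData.Separates.{u} Z E) (hA : InVariety E A) (γ : AlgCon L A)
    (h : ∀ i, γ.r (Z.zeroA A i) (Z.oneA A i)) : γ = AlgCon.nabla L A := by
  refine conQuot_subsingleton γ (hsep (ConQuot γ) (inVariety_conQuot hA γ) ?_)
  intro i
  rw [← map_zeroA Z (conQuotMk γ) i, ← map_oneA Z (conQuotMk γ) i]
  exact Quotient.sound (h i)

/-! ### Central elements from pairs of complementary factor congruences -/

theorem pairEquiv_bijective {θ δ : AlgCon L A} (h : IsComplFC θ δ) :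
    Function.Bijective (fun a : A => (ConQuot.mk θ a, ConQuot.mk δ a)) := by
  constructor
  · intro a b hab
    have h1 : θ.r a b := Quotient.exact (s := θ.setoid) (congrArg Prod.fst hab)
    have h2 : δ.r a b := Quotient.exact (s := δ.setoid) (congrArg Prod.snd hab)
    exact (AlgCon.r_congr h.1 a b).mp ⟨h1, h2⟩
  · intro p
    obtain ⟨a, ha⟩ := conQuot_mk_surjective θ p.1
    obtain ⟨b, hb⟩ := conQuot_mk_surjective δ p.2
    obtain ⟨z, hz1, hz2⟩ := h.2 a b
    refine ⟨z, Prod.ext ?_ ?_⟩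
    · rw [← ha]; exact Quotient.sound (s := θ.setoid) (θ.symm hz1)
    · rw [← hb]; exact Quotient.sound (s := δ.setoid) hz2

/-- The canonical isomorphism `A ≅ A/θ × A/δ` for complementary factor congruences. -/
noncomputable def pairEquiv [L.IsAlgebraic] {θ δ : AlgCon L A} (h : IsComplFC θ δ) :
    A ≃[L] (ConQuot θ × ConQuot δ) where
  toEquiv := Equiv.ofBijective _ (pairEquiv_bijective h)
  map_fun' := fun f x => by
    show (ConQuot.mk θ (funMap f x), ConQuot.mk δ (funMap f x)) =
      (funMap f (fun i => ConQuot.mk θ (x i)), funMap f (fun i => ConQuot.mk δ (x i)))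
    rw [conQuot_funMap_mk, conQuot_funMap_mk]
  map_rel' := fun r _ => isEmptyElim r

theorem central_of_pair [L.IsAlgebraic] {E : Set (Identity L)} {Z : ZeroOneData L}
    (hA : InVariety E A) {θ δ : AlgCon L A} {e : Fin Z.n → A}
    (h : IsComplFC θ δ) (h0 : inCon θ e (Z.zeroA A)) (h1 : inCon δ e (Z.oneA A)) :
    IsCentral E Z A e := by
  refine ⟨⟨ConQuot θ, ConQuot δ, inVariety_conQuot hA θ, inVariety_conQuot hA δ,
    pairEquiv h, ?_⟩⟩
  intro i
  show (ConQuot.mk θ (e i), ConQuot.mk δ (e i)) = _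
  refine Prod.ext ?_ ?_
  · rw [← map_zeroA Z (conQuotMk θ) i]
    exact Quotient.sound (s := θ.setoid) (h0 i)
  · rw [← map_oneA Z (conQuotMk δ) i]
    exact Quotient.sound (s := δ.setoid) (h1 i)

/-! ### Pairs of complementary factor congruences from central elements -/

/-- The kernel of the first projection composed with an isomorphism. -/
def kerFst {A₁ A₂ : Type u} [L.Structure A₁] [L.Structure A₂]
    (τ : A ≃[L] (A₁ × A₂)) : AlgCon L A where
  r a b := (τ a).1 = (τ b).1
  refl _ := rfl
  symm h := h.symm
  trans h1 h2 := h1.trans h2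
  compat f x y hxy := by
    show (τ (funMap f x)).1 = (τ (funMap f y)).1
    rw [HomClass.map_fun τ f x, HomClass.map_fun τ f y]
    show (funMap f (fun i => τ (x i))).1 = (funMap f (fun i => τ (y i))).1
    show funMap f (fun i => (τ (x i)).1) = funMap f (fun i => (τ (y i)).1)
    exact congrArg _ (funext hxy)

/-- The kernel of the second projection composed with an isomorphism. -/
def kerSnd {A₁ A₂ : Type u} [L.Structure A₁] [L.Structure A₂]
    (τ : A ≃[L] (A₁ × A₂)) : AlgCon L A where
  r a b := (τ a).2 = (τ b).2
  refl _ := rfl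
  symm h := h.symm
  trans h1 h2 := h1.trans h2
  compat f x y hxy := by
    show (τ (funMap f x)).2 = (τ (funMap f y)).2
    rw [HomClass.map_fun τ f x, HomClass.map_fun τ f y]
    show (funMap f (fun i => τ (x i))).2 = (funMap f (fun i => τ (y i))).2
    show funMap f (fun i => (τ (x i)).2) = funMap f (fun i => (τ (y i)).2)
    exact congrArg _ (funext hxy)

theorem exists_pairFor {E : Set (Identity L)} {Z : ZeroOneData L} {e : Fin Z.n → A}
    (he : IsCentral E Z A e) : ∃ θ δ, PairFor Z A e θ δ := by
  obtain ⟨w⟩ := he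
  letI := w.s₁; letI := w.s₂
  refine ⟨kerFst w.iso, kerSnd w.iso, ⟨?_, ?_⟩, ?_, ?_⟩
  · apply AlgCon.ext'
    intro a b
    constructor
    · rintro ⟨h1, h2⟩
      exact w.iso.injective (Prod.ext h1 h2)
    · rintro rfl
      exact ⟨rfl, rfl⟩
  · intro a b
    refine ⟨w.iso.symm ((w.iso a).1, (w.iso b).2), ?_, ?_⟩
    · show (w.iso a).1 = (w.iso (w.iso.symm ((w.iso a).1, (w.iso b).2))).1
      rw [w.iso.apply_symm_apply]
    · show (w.iso (w.iso.symm ((w.iso a).1, (w.iso b).2))).2 = (w.iso b).2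
      rw [w.iso.apply_symm_apply]
  · intro i
    show (w.iso (e i)).1 = (w.iso (Z.zeroA A i)).1
    rw [w.he i, map_zeroA Z w.iso i, zeroA_prod]
  · intro i
    show (w.iso (e i)).2 = (w.iso (Z.oneA A i)).2
    rw [w.he i, map_oneA Z w.iso i, oneA_prod]
/-! ### The Boolean algebra of factor congruences -/

/-- The subtype of factor congruences. -/
abbrev FCS (L : FirstOrder.Language.{0, 0}) (A : Type u) [L.Structure A] : Type u :=
  {θ : AlgCon L A // θ ∈ FC L A}

/-- The Boolean algebra structure on `FC(A)` provided by BFC. -/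
noncomputable def fcsBA (hbs : IsBooleanSublattice (FC L A)) : BooleanAlgebra (FCS L A) :=
  letI po : PartialOrder (FCS L A) :=
    { le := fun x y => AlgCon.le x.1 y.1
      le_refl := fun _ _ _ h => h
      le_trans := fun _ _ _ h1 h2 _ _ h => h2 (h1 h)
      le_antisymm := fun _ _ h1 h2 => Subtype.ext (AlgCon.le_antisymm' h1 h2) }
  letI lat : Lattice (FCS L A) :=
    { po with
      sup := fun x y => ⟨x.1.sup y.1, hbs.2.2.2.1 x.1 x.2 y.1 y.2⟩
      le_sup_left := fun x y => AlgCon.le_sup_left' x.1 y.1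
      le_sup_right := fun x y => AlgCon.le_sup_right' x.1 y.1
      sup_le := fun _ _ _ h1 h2 => AlgCon.sup_le' h1 h2
      inf := fun x y => ⟨x.1.inf y.1, hbs.2.2.1 x.1 x.2 y.1 y.2⟩
      inf_le_left := fun x y => AlgCon.inf_le_left' x.1 y.1
      inf_le_right := fun x y => AlgCon.inf_le_right' x.1 y.1
      le_inf := fun _ _ _ h1 h2 => AlgCon.le_inf' h1 h2 }
  letI dl : DistribLattice (FCS L A) :=
    DistribLattice.ofInfSupLe fun a b c =>
      le_of_eq (Subtype.ext (hbs.2.2.2.2.1 a.1 a.2 b.1 b.2 c.1 c.2))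
  letI bo : BoundedOrder (FCS L A) :=
    { top := ⟨AlgCon.nabla L A, hbs.2.1⟩
      le_top := fun x => AlgCon.le_nabla x.1
      bot := ⟨AlgCon.delta L A, hbs.1⟩
      bot_le := fun x => AlgCon.delta_le x.1 }
  letI : ComplementedLattice (FCS L A) :=
    ⟨fun x => by
      obtain ⟨δ, hδ, h1, h2⟩ := hbs.2.2.2.2.2 x.1 x.2
      exact ⟨⟨δ, hδ⟩, IsCompl.of_eq (Subtype.ext h1) (Subtype.ext h2)⟩⟩
  DistribLattice.booleanAlgebraOfComplemented _

section BFC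

/-- Complementary factor congruences give complements in `FCS`. -/
theorem isCompl_of_isComplFC (hbs : IsBooleanSublattice (FC L A)) :
    ∀ {θ δ : AlgCon L A} (h : IsComplFC θ δ),
      letI := fcsBA hbs
      IsCompl (α := FCS L A) ⟨θ, h.memL⟩ ⟨δ, h.memR⟩ := by
  letI := fcsBA hbs
  intro θ δ h
  apply IsCompl.of_eq
  · exact Subtype.ext h.1
  · exact Subtype.ext h.sup_eq

theorem isComplFC_of_compl (hbs : IsBooleanSublattice (FC L A))
    {θ γ : AlgCon L A} (hθ : θ ∈ FC L A) (hγ : γ ∈ FC L A)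
    (h1 : θ.inf γ = AlgCon.delta L A) (h2 : θ.sup γ = AlgCon.nabla L A) :
    IsComplFC θ γ := by
  letI := fcsBA hbs
  obtain ⟨δ₀, hδ₀⟩ := hθ
  have hc0 : IsCompl (α := FCS L A) ⟨θ, hδ₀.memL⟩ ⟨δ₀, hδ₀.memR⟩ :=
    isCompl_of_isComplFC hbs hδ₀
  have hc1 : IsCompl (α := FCS L A) ⟨θ, hδ₀.memL⟩ ⟨γ, hγ⟩ := by
    apply IsCompl.of_eq
    · exact Subtype.ext h1
    · exact Subtype.ext h2
  have : δ₀ = γ := congrArg Subtype.val (hc0.right_unique hc1)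
  exact this ▸ hδ₀

theorem complFC_unique (hbs : IsBooleanSublattice (FC L A))
    {θ δ δ' : AlgCon L A} (h : IsComplFC θ δ) (h' : IsComplFC θ δ') :
    δ = δ' := by
  letI := fcsBA hbs
  have hc0 : IsCompl (α := FCS L A) ⟨θ, h.memL⟩ ⟨δ, h.memR⟩ := isCompl_of_isComplFC hbs h
  have hc1 : IsCompl (α := FCS L A) ⟨θ, h.memL⟩ ⟨δ', h'.memR⟩ := isCompl_of_isComplFC hbs h'
  exact congrArg Subtype.val (hc0.right_unique hc1)

theorem isComplFC_inf_sup (hbs : IsBooleanSublattice (FC L A)) {θ₀ θ₁ δ₀ δ₁ : AlgCon L A}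
    (h : IsComplFC θ₀ θ₁) (h' : IsComplFC δ₀ δ₁) :
    IsComplFC (θ₀.inf δ₀) (θ₁.sup δ₁) := by
  letI := fcsBA hbs
  have hc : IsCompl ((⟨θ₀, h.memL⟩ : FCS L A) ⊓ ⟨δ₀, h'.memL⟩)
      ((⟨θ₁, h.memR⟩ : FCS L A) ⊔ ⟨δ₁, h'.memR⟩) :=
    (isCompl_of_isComplFC hbs h).inf_sup (isCompl_of_isComplFC hbs h')
  refine isComplFC_of_compl hbs (hbs.2.2.1 θ₀ h.memL δ₀ h'.memL)
    (hbs.2.2.2.1 θ₁ h.memR δ₁ h'.memR) ?_ ?_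
  · exact congrArg Subtype.val (disjoint_iff.mp hc.disjoint)
  · exact congrArg Subtype.val (codisjoint_iff.mp hc.codisjoint)

theorem isComplFC_sup_inf (hbs : IsBooleanSublattice (FC L A)) {θ₀ θ₁ δ₀ δ₁ : AlgCon L A}
    (h : IsComplFC θ₀ θ₁) (h' : IsComplFC δ₀ δ₁) :
    IsComplFC (θ₀.sup δ₀) (θ₁.inf δ₁) :=
  (isComplFC_inf_sup hbs h.symm' h'.symm').symm'

theorem pairFor_unique (hbs : IsBooleanSublattice (FC L A)) {E : Set (Identity L)}
    {Z : ZeroOneData L}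
    (hA : InVariety E A) (hsep : ZeroOneData.Separates.{u} Z E)
    {e : Fin Z.n → A} {θ δ θ' δ' : AlgCon L A}
    (h : PairFor Z A e θ δ) (h' : PairFor Z A e θ' δ') : θ = θ' ∧ δ = δ' := by
  have hm : ∀ {γ₁ γ₂ : AlgCon L A}, inCon γ₁ e (Z.zeroA A) → inCon γ₂ e (Z.oneA A) →
      γ₁.sup γ₂ = AlgCon.nabla L A := by
    intro γ₁ γ₂ hg1 hg2
    apply eq_nabla_of_zero_one hsep hA
    intro i
    exact (γ₁.sup γ₂).trans ((γ₁.sup γ₂).symm (AlgCon.le_sup_left' γ₁ γ₂ (hg1 i)))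
      (AlgCon.le_sup_right' γ₁ γ₂ (hg2 i))
  letI := fcsBA hbs
  have hxy : IsCompl (α := FCS L A) ⟨θ, h.1.memL⟩ ⟨δ, h.1.memR⟩ :=
    isCompl_of_isComplFC hbs h.1
  have hx'y' : IsCompl (α := FCS L A) ⟨θ', h'.1.memL⟩ ⟨δ', h'.1.memR⟩ :=
    isCompl_of_isComplFC hbs h'.1
  have c1 : Codisjoint (α := FCS L A) ⟨θ, h.1.memL⟩ ⟨δ', h'.1.memR⟩ :=
    codisjoint_iff.mpr (Subtype.ext (hm h.2.1 h'.2.2))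
  have c2 : Codisjoint (α := FCS L A) ⟨θ', h'.1.memL⟩ ⟨δ, h.1.memR⟩ :=
    codisjoint_iff.mpr (Subtype.ext (hm h'.2.1 h.2.2))
  have key : ∀ {u v w : FCS L A}, IsCompl u v → Codisjoint u w → v ≤ w := by
    intro u v w huv hcw
    have hv : v = v ⊓ w := by
      calc v = v ⊓ (u ⊔ w) := by rw [codisjoint_iff.mp hcw, inf_top_eq]
        _ = (v ⊓ u) ⊔ (v ⊓ w) := inf_sup_left v u w
        _ = v ⊓ w := by rw [disjoint_iff.mp huv.symm.disjoint, bot_sup_eq]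
    exact hv.le.trans inf_le_right
  have hyy' : (⟨δ, h.1.memR⟩ : FCS L A) = ⟨δ', h'.1.memR⟩ :=
    le_antisymm (key hxy c1) (key hx'y' c2)
  have hxx' : (⟨θ, h.1.memL⟩ : FCS L A) = ⟨θ', h'.1.memL⟩ := by
    refine (hxy.symm.right_unique ?_)
    rw [hyy']
    exact hx'y'.symm
  exact ⟨congrArg Subtype.val hxx', congrArg Subtype.val hyy'⟩

end BFC

theorem pairFor_central_unique {Z : ZeroOneData L} {e e' : Fin Z.n → A} {θ δ : AlgCon L A}
    (h : PairFor Z A e θ δ) (h' : PairFor Z A e' θ δ) : e = e' := by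
  funext i
  have h1 : θ.r (e i) (e' i) := θ.trans (h.2.1 i) (θ.symm (h'.2.1 i))
  have h2 : δ.r (e i) (e' i) := δ.trans (h.2.2 i) (δ.symm (h'.2.2 i))
  exact (AlgCon.r_congr h.1.1 (e i) (e' i)).mp ⟨h1, h2⟩
/-! ### The correspondence between central elements and factor congruences -/

/-- The subtype of central elements. -/
abbrev ZS (E : Set (Identity L)) (Z : ZeroOneData L) (A : Type u) [L.Structure A] :=
  {e : Fin Z.n → A // IsCentral E Z A e}

section Main

variable {E : Set (Identity L)} {Z : ZeroOneData L}

/-- The factor congruence `θ_{0,e}` associated with a central element. -/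
noncomputable def th0 (e : ZS E Z A) : AlgCon L A := (exists_pairFor e.2).choose

/-- The factor congruence `θ_{1,e}` associated with a central element. -/
noncomputable def th1 (e : ZS E Z A) : AlgCon L A := (exists_pairFor e.2).choose_spec.choose

theorem pair_th (e : ZS E Z A) : PairFor Z A e.1 (th0 e) (th1 e) :=
  (exists_pairFor e.2).choose_spec.choose_spec

/-- A chosen complementary factor congruence. -/
noncomputable def fccD (s : FCS L A) : AlgCon L A := s.2.choose

theorem fccD_spec (s : FCS L A) : IsComplFC s.1 (fccD s) := s.2.choose_spec

theorem exists_cen (Z : ZeroOneData L) (s : FCS L A) :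
    ∃ e : Fin Z.n → A, PairFor Z A e s.1 (fccD s) := by
  choose zf h1 h2 using fun i => (fccD_spec s).2 (Z.zeroA A i) (Z.oneA A i)
  exact ⟨zf, fccD_spec s, fun i => s.1.symm (h1 i), h2⟩

/-- The central element associated with a factor congruence. -/
noncomputable def cenD (Z : ZeroOneData L) (s : FCS L A) : Fin Z.n → A :=
  (exists_cen Z s).choose

theorem cenD_spec (Z : ZeroOneData L) (s : FCS L A) :
    PairFor Z A (cenD Z s) s.1 (fccD s) :=
  (exists_cen Z s).choose_spec

/-- From central elements to factor congruences. -/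
noncomputable def toF (e : ZS E Z A) : FCS L A := ⟨th0 e, th1 e, (pair_th e).1⟩

/-- From factor congruences to central elements. -/
noncomputable def invF [L.IsAlgebraic] (E : Set (Identity L)) (Z : ZeroOneData L)
    (hA : InVariety E A) (s : FCS L A) : ZS E Z A :=
  ⟨cenD Z s, central_of_pair hA (cenD_spec Z s).1 (cenD_spec Z s).2.1 (cenD_spec Z s).2.2⟩

theorem toF_invF [L.IsAlgebraic] (hbs : IsBooleanSublattice (FC L A)) (hA : InVariety E A)
    (hsep : ZeroOneData.Separates.{u} Z E) (s : FCS L A) : toF (invF E Z hA s) = s :=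
  Subtype.ext (pairFor_unique hbs hA hsep (pair_th (invF E Z hA s)) (cenD_spec Z s)).1

theorem fcc_eq (hbs : IsBooleanSublattice (FC L A)) {s : FCS L A} {δ : AlgCon L A}
    (h : IsComplFC s.1 δ) : fccD s = δ :=
  complFC_unique hbs (fccD_spec s) h

theorem invF_toF [L.IsAlgebraic] (hbs : IsBooleanSublattice (FC L A)) (hA : InVariety E A)
    (e : ZS E Z A) : invF E Z hA (toF e) = e := by
  have h1 : fccD (toF e) = th1 e := fcc_eq hbs (pair_th e).1
  apply Subtype.ext
  refine pairFor_central_unique ?_ (pair_th e)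
  have h2 := cenD_spec Z (toF e)
  rw [h1] at h2
  exact h2

end Main

end Paper



open Paper


/-- In a variety with 0⃗ and 1⃗ having BFC, the center `Z(A)` with
the operations defined by the associated congruence conditions is a Boolean
algebra, and `e⃗ ↦ θ_{0,e}` is a Boolean algebra isomorphism onto
`(FC(A), ∨, ∩, *, Δ, ∇)`. -/
theorem statement7 (L : FirstOrder.Language.{0, 0}) [L.IsAlgebraic]
    [Finite (Σ n, L.Functions n)]
    (E : Set (Identity L)) (Z : ZeroOneData L)
    (hsep : ZeroOneData.Separates.{u} Z E) (hbfc : HasBFC.{u} E)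
    (A : Type u) [L.Structure A] (hA : InVariety E A) :
    ∃ inst : BooleanAlgebra {e : Fin Z.n → A // IsCentral E Z A e},
      (∀ e f : {e : Fin Z.n → A // IsCentral E Z A e},
        IsMeetOf Z A e.1 f.1 (inst.inf e f).1) ∧
      (∀ e f : {e : Fin Z.n → A // IsCentral E Z A e},
        IsJoinOf Z A e.1 f.1 (inst.sup e f).1) ∧
      (∀ e : {e : Fin Z.n → A // IsCentral E Z A e},
        IsComplOf Z A e.1 (inst.compl e).1) ∧
      inst.bot.1 = Z.zeroA A ∧ inst.top.1 = Z.oneA A ∧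
      ∃ g : {e : Fin Z.n → A // IsCentral E Z A e} → AlgCon L A,
        (∀ e, ∃ δ, PairFor Z A e.1 (g e) δ) ∧
        Function.Injective g ∧
        (∀ θ ∈ FC L A, ∃ e, g e = θ) ∧
        (∀ e f, g (inst.inf e f) = (g e).inf (g f)) ∧
        (∀ e f, g (inst.sup e f) = (g e).sup (g f)) ∧
        (∀ e, IsComplFC (g e) (g (inst.compl e))) ∧
        g inst.bot = AlgCon.delta L A ∧ g inst.top = AlgCon.nabla L A := by
  classical
  have hbs : IsBooleanSublattice (FC L A) := hbfc A hA
  letI sBA : BooleanAlgebra (FCS L A) := fcsBA hbs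
  letI : Max (ZS E Z A) := ⟨fun a b => invF E Z hA (toF a ⊔ toF b)⟩
  letI : Min (ZS E Z A) := ⟨fun a b => invF E Z hA (toF a ⊓ toF b)⟩
  letI : Top (ZS E Z A) := ⟨invF E Z hA ⊤⟩
  letI : Bot (ZS E Z A) := ⟨invF E Z hA ⊥⟩
  letI : Compl (ZS E Z A) := ⟨fun a => invF E Z hA (toF a)ᶜ⟩
  letI : SDiff (ZS E Z A) := ⟨fun a b => invF E Z hA (toF a \ toF b)⟩
  letI : HImp (ZS E Z A) := ⟨fun a b => invF E Z hA (toF a ⇨ toF b)⟩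
  letI : LE (ZS E Z A) := ⟨fun a b => toF a ≤ toF b⟩
  letI : LT (ZS E Z A) := ⟨fun a b => toF a < toF b⟩
  have hinj : Function.Injective (toF (E := E) (Z := Z) (A := A)) := by
    intro a b hab
    have h := congrArg (invF E Z hA) hab
    rwa [invF_toF hbs hA, invF_toF hbs hA] at h
  letI instZ : BooleanAlgebra (ZS E Z A) :=
    Function.Injective.booleanAlgebra toF hinj Iff.rfl Iff.rfl
      (fun _ _ => toF_invF hbs hA hsep _) (fun _ _ => toF_invF hbs hA hsep _)
      (toF_invF hbs hA hsep _) (toF_invF hbs hA hsep _)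
      (fun _ => toF_invF hbs hA hsep _) (fun _ _ => toF_invF hbs hA hsep _)
      (fun _ _ => toF_invF hbs hA hsep _)
  -- facts about complements
  have hcomplFC : ∀ e : ZS E Z A, IsComplFC (th0 e) ((toF e)ᶜ : FCS L A).1 := by
    intro e
    have hcc : IsCompl (toF e) ((toF e)ᶜ) := isCompl_compl
    have hd : (th0 e).inf ((toF e)ᶜ : FCS L A).1 = AlgCon.delta L A :=
      congrArg Subtype.val (disjoint_iff.mp hcc.disjoint)
    have hc : (th0 e).sup ((toF e)ᶜ : FCS L A).1 = AlgCon.nabla L A :=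
      congrArg Subtype.val (codisjoint_iff.mp hcc.codisjoint)
    exact isComplFC_of_compl hbs (toF e).2 ((toF e)ᶜ : FCS L A).2 hd hc
  have hcompl1 : ∀ e : ZS E Z A, ((toF e)ᶜ : FCS L A).1 = th1 e := fun e =>
    complFC_unique hbs (hcomplFC e) (pair_th e).1
  refine ⟨instZ, ?_, ?_, ?_, ?_, ?_, fun e => th0 e, fun e => ⟨th1 e, pair_th e⟩,
    ?_, ?_, ?_, ?_, ?_, ?_, ?_⟩
  · -- meet
    intro e f
    have hpf := cenD_spec Z (toF e ⊓ toF f)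
    have hfc : fccD (toF e ⊓ toF f) = (th1 e).sup (th1 f) :=
      fcc_eq hbs (isComplFC_inf_sup hbs (pair_th e).1 (pair_th f).1)
    refine ⟨th0 e, th1 e, th0 f, th1 f, pair_th e, pair_th f, ?_, ?_⟩
    · exact hpf.2.1
    · exact hfc ▸ hpf.2.2
  · -- join
    intro e f
    have hpf := cenD_spec Z (toF e ⊔ toF f)
    have hfc : fccD (toF e ⊔ toF f) = (th1 e).inf (th1 f) :=
      fcc_eq hbs (isComplFC_sup_inf hbs (pair_th e).1 (pair_th f).1)
    refine ⟨th0 e, th1 e, th0 f, th1 f, pair_th e, pair_th f, ?_, ?_⟩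
    · exact hpf.2.1
    · exact hfc ▸ hpf.2.2
  · -- complement
    intro e
    have hpf := cenD_spec Z ((toF e)ᶜ)
    have h3 : fccD ((toF e)ᶜ : FCS L A) = th0 e := fcc_eq hbs (hcomplFC e).symm'
    refine ⟨th0 e, th1 e, pair_th e, ?_, ?_⟩
    · exact h3 ▸ hpf.2.2
    · exact (hcompl1 e) ▸ hpf.2.1
  · -- bot
    have hpf := cenD_spec Z (⊥ : FCS L A)
    funext i
    exact hpf.2.1 i
  · -- top
    have hpf := cenD_spec Z (⊤ : FCS L A)
    have hfc : fccD (⊤ : FCS L A) = AlgCon.delta L A := IsComplFC.nabla_right (fccD_spec ⊤)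
    funext i
    have h := hpf.2.2 i
    rw [hfc] at h
    exact h
  · -- injectivity of g
    intro a b hab
    exact hinj (Subtype.ext hab)
  · -- surjectivity onto FC
    intro θ hθ
    refine ⟨invF E Z hA ⟨θ, hθ⟩, ?_⟩
    exact congrArg Subtype.val (toF_invF hbs hA hsep ⟨θ, hθ⟩)
  · -- g inf
    intro e f
    exact congrArg Subtype.val (toF_invF hbs hA hsep (toF e ⊓ toF f))
  · -- g sup
    intro e f
    exact congrArg Subtype.val (toF_invF hbs hA hsep (toF e ⊔ toF f))
  · -- g compl
    intro e
    have h : th0 (invF E Z hA ((toF e)ᶜ)) = ((toF e)ᶜ : FCS L A).1 :=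
      congrArg Subtype.val (toF_invF hbs hA hsep ((toF e)ᶜ))
    show IsComplFC (th0 e) (th0 (invF E Z hA ((toF e)ᶜ)))
    rw [h, hcompl1 e]
    exact (pair_th e).1
  · -- g bot
    exact congrArg Subtype.val (toF_invF hbs hA hsep ⊥)
  · -- g top
    exact congrArg Subtype.val (toF_invF hbs hA hsep ⊤)
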